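/- arXiv:1003.2541 — 9 statements merged into one kernel-verified Lean document; each statement's English description precedes it below -/
import Mathlib

section
/- The evolution algebra of a bisexual population is not power-associative in general: let n = 1 and ν = 2, so that necessarily P^f_{11,1} = P^f_{12,1} = 1, and set a = P^m_{11,1} and b = P^m_{12,1}. If a ≠ 1 and a ≠ b, then for z = e^f_1 + e^m_1 one has (z²)(z²) ≠ ((z²)z)z. -/
open Finset

/-- The bilinear multiplication of the evolution algebra of a bisexual population (EABP). -/
noncomputable def bmul {n ν : ℕ} (Pf : Fin n → Fin ν → Fin n → ℝ)
    (Pm : Fin n → Fin ν → Fin ν → ℝ)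
    (z t : (Fin n → ℝ) × (Fin ν → ℝ)) : (Fin n → ℝ) × (Fin ν → ℝ) :=
  (fun p => (1 / 2) * ∑ i, ∑ j, Pf i j p * (z.1 i * t.2 j + t.1 i * z.2 j),
   fun q => (1 / 2) * ∑ i, ∑ j, Pm i j q * (z.1 i * t.2 j + t.1 i * z.2 j))

/-- The EABP is not power-associative in general: for `n = 1`, `ν = 2`
(so that necessarily `P^f_{11,1} = P^f_{12,1} = 1`), with `a = P^m_{11,1} ≠ 1`
and `a ≠ b = P^m_{12,1}`, the element `z = e^f_1 + e^m_1` satisfies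
`(z²)(z²) ≠ ((z²)z)z`. -/
theorem eabp_not_power_associative
    (Pf : Fin 1 → Fin 2 → Fin 1 → ℝ) (Pm : Fin 1 → Fin 2 → Fin 2 → ℝ)
    (hPf0 : ∀ i k j, 0 ≤ Pf i k j) (hPf1 : ∀ i k, ∑ j, Pf i k j = 1)
    (hPm0 : ∀ i k l, 0 ≤ Pm i k l) (hPm1 : ∀ i k, ∑ l, Pm i k l = 1)
    (ha : Pm 0 0 0 ≠ 1) (hab : Pm 0 0 0 ≠ Pm 0 1 0)
    (z : (Fin 1 → ℝ) × (Fin 2 → ℝ))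
    (hz : z = (fun _ => 1, fun k => if k = 0 then 1 else 0)) :
    bmul Pf Pm (bmul Pf Pm z z) (bmul Pf Pm z z) ≠
      bmul Pf Pm (bmul Pf Pm (bmul Pf Pm z z) z) z := by

  intro h
  have key := congrFun (congrArg Prod.snd h) 0
  have hf0 : Pf 0 0 0 = 1 := by have := hPf1 0 0; simpa [Fin.sum_univ_succ] using this
  have hf1 : Pf 0 1 0 = 1 := by have := hPf1 0 1; simpa [Fin.sum_univ_succ] using this
  have hm0 : Pm 0 0 1 = 1 - Pm 0 0 0 := by
    have := hPm1 0 0; simp [Fin.sum_univ_succ] at this; linarith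
  have hm1 : Pm 0 1 1 = 1 - Pm 0 1 0 := by
    have := hPm1 0 1; simp [Fin.sum_univ_succ] at this; linarith
  set a := Pm 0 0 0 with hadef
  set b := Pm 0 1 0 with hbdef
  have ha1 : a ≤ 1 := by have := hPm0 0 0 1; rw [hm0] at this; linarith
  have hb0 : 0 ≤ b := hPm0 0 1 0
  simp [bmul, hz, Fin.sum_univ_succ, Fin.succ_zero_eq_one] at key
  rw [hf0, hf1, hm0, hm1] at key
  have hne1 : a - 1 ≠ 0 := sub_ne_zero.mpr ha
  have hne2 : a - b ≠ 0 := sub_ne_zero.mpr hab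
  have hne3 : a - b - 2 ≠ 0 := by intro h'; linarith
  have : (a - 1) * (a - b) * (a - b - 2) = 0 := by ring_nf at key ⊢; linarith [key]
  rcases mul_eq_zero.mp this with h' | h'
  · rcases mul_eq_zero.mp h' with h'' | h'' <;> [exact hne1 h''; exact hne2 h'']
  · exact hne3 h'
end

section
/- The evolution algebra of a bisexual population has no nonzero character: if σ : ℬ → ℝ is a linear map satisfying σ(zt) = σ(z)σ(t) for all z, t ∈ ℬ, then σ = 0. -/
open Finset

/-- The EABP has no nonzero character: every multiplicative linear form on it is zero. -/
theorem eabp_no_character {n ν : ℕ} [NeZero n] [NeZero ν]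
    (Pf : Fin n → Fin ν → Fin n → ℝ) (Pm : Fin n → Fin ν → Fin ν → ℝ)
    (hPf0 : ∀ i k j, 0 ≤ Pf i k j) (hPf1 : ∀ i k, ∑ j, Pf i k j = 1)
    (hPm0 : ∀ i k l, 0 ≤ Pm i k l) (hPm1 : ∀ i k, ∑ l, Pm i k l = 1)
    (σ : ((Fin n → ℝ) × (Fin ν → ℝ)) →ₗ[ℝ] ℝ)
    (hσ : ∀ z t, σ (bmul Pf Pm z t) = σ z * σ t) :
    σ = 0 := by
  have hf : ∀ x : Fin n → ℝ, σ ((x, 0) : (Fin n → ℝ) × (Fin ν → ℝ)) = 0 := by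
    intro x
    have h := hσ (x, 0) (x, 0)
    have hz : bmul Pf Pm ((x, 0) : (Fin n → ℝ) × (Fin ν → ℝ)) (x, 0) = 0 := by
      simp [bmul, Prod.ext_iff, funext_iff]
    rw [hz, map_zero] at h
    exact pow_eq_zero_iff (n := 2) (by norm_num) |>.mp (by rw [sq]; exact h.symm)
  have hm : ∀ y : Fin ν → ℝ, σ ((0, y) : (Fin n → ℝ) × (Fin ν → ℝ)) = 0 := by
    intro y
    have h := hσ (0, y) (0, y)
    have hz : bmul Pf Pm ((0, y) : (Fin n → ℝ) × (Fin ν → ℝ)) (0, y) = 0 := by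
      simp [bmul, Prod.ext_iff, funext_iff]
    rw [hz, map_zero] at h
    exact pow_eq_zero_iff (n := 2) (by norm_num) |>.mp (by rw [sq]; exact h.symm)
  apply LinearMap.ext; intro z
  have : z = ((z.1, 0) : (Fin n → ℝ) × (Fin ν → ℝ)) + (0, z.2) := by
    simp [Prod.ext_iff]
  rw [LinearMap.zero_apply, this, map_add, hf, hm, add_zero]
end

section
/- The evolution algebra of a bisexual population is dibaric: the linear map φ : ℬ → 𝔄 determined by φ(e^f_i) = w for i = 1,…,n and φ(e^m_k) = m for k = 1,…,ν is a surjective algebra homomorphism, i.e. φ(zt) = φ(z)φ(t) for all z, t ∈ ℬ and φ is onto 𝔄. -/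
open Finset

/-- The multiplication of the sex differentiation algebra `𝔄 = ⟨w, m⟩` with
`w² = m² = 0`, `wm = mw = (1/2)(w + m)`; an element `α w + β m` is represented by
the pair `(α, β) ∈ ℝ × ℝ`. -/
noncomputable def amul (p q : ℝ × ℝ) : ℝ × ℝ :=
  ((1 / 2) * (p.1 * q.2 + p.2 * q.1), (1 / 2) * (p.1 * q.2 + p.2 * q.1))

/-- The map `φ : ℬ → 𝔄` with `φ(e^f_i) = w`, `φ(e^m_k) = m`, i.e.
`φ(x, y) = X(x)·w + Y(y)·m`. -/
noncomputable def phi {n ν : ℕ} (z : (Fin n → ℝ) × (Fin ν → ℝ)) : ℝ × ℝ :=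
  (∑ i, z.1 i, ∑ j, z.2 j)

/-- The EABP is dibaric: `φ` is a surjective algebra homomorphism onto the sex
differentiation algebra `𝔄`. -/
theorem eabp_dibaric {n ν : ℕ} [NeZero n] [NeZero ν]
    (Pf : Fin n → Fin ν → Fin n → ℝ) (Pm : Fin n → Fin ν → Fin ν → ℝ)
    (hPf0 : ∀ i k j, 0 ≤ Pf i k j) (hPf1 : ∀ i k, ∑ j, Pf i k j = 1)
    (hPm0 : ∀ i k l, 0 ≤ Pm i k l) (hPm1 : ∀ i k, ∑ l, Pm i k l = 1) :
    (∀ z t : (Fin n → ℝ) × (Fin ν → ℝ),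
      phi (bmul Pf Pm z t) = amul (phi z) (phi t)) ∧
    Function.Surjective (phi (n := n) (ν := ν)) := by
  constructor
  · intro z t
    have hk : ∀ (m : ℕ) (P : Fin n → Fin ν → Fin m → ℝ)
        (hP1 : ∀ i k, ∑ j, P i k j = 1),
        (∑ p, (1 / 2) * ∑ i, ∑ j, P i j p * (z.1 i * t.2 j + t.1 i * z.2 j))
          = (1 / 2) * ((∑ i, z.1 i) * (∑ j, t.2 j) + (∑ j, z.2 j) * (∑ i, t.1 i)) := by
      intro m P hP1
      rw [← Finset.mul_sum]
      congr 1
      rw [Finset.sum_comm]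
      have : ∀ i : Fin n, (∑ j : Fin ν, ∑ p : Fin m, P i j p * (z.1 i * t.2 j + t.1 i * z.2 j))
          = ∑ j : Fin ν, (z.1 i * t.2 j + t.1 i * z.2 j) := by
        intro i
        refine Finset.sum_congr rfl fun j _ => ?_
        rw [← Finset.sum_mul, hP1 i j, one_mul]
      calc (∑ i, ∑ p, ∑ j, P i j p * (z.1 i * t.2 j + t.1 i * z.2 j))
          = ∑ i, ∑ j, (z.1 i * t.2 j + t.1 i * z.2 j) := by
            refine Finset.sum_congr rfl fun i _ => ?_
            rw [Finset.sum_comm]; exact this i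
        _ = (∑ i, z.1 i) * (∑ j, t.2 j) + (∑ j, z.2 j) * (∑ i, t.1 i) := by
            simp [Finset.sum_add_distrib, Finset.mul_sum, Finset.sum_mul, mul_comm, Finset.sum_comm (γ := ℝ)]
            rw [Finset.sum_comm (s := Finset.univ (α := Fin n)), Finset.sum_comm (s := Finset.univ (α := Fin n))]
    simp only [phi, bmul, amul]
    exact Prod.ext (hk n Pf hPf1) (hk ν Pm hPm1)
  · intro p
    refine ⟨(Pi.single 0 p.1, Pi.single 0 p.2), ?_⟩
    simp [phi]
end

section
/- The evolution algebra of a bisexual population is a (non-associative) Banach algebra: for all z, t ∈ ℬ one has ‖zt‖ ≤ ‖z‖·‖t‖, where ‖·‖ is the ℓ¹ norm on ℝ^{n+ν}. -/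
open Finset

/-- The ℓ¹ norm on the EABP: `‖(x,y)‖ = Σᵢ |xᵢ| + Σⱼ |yⱼ|`. -/
noncomputable def bnorm {n ν : ℕ} (z : (Fin n → ℝ) × (Fin ν → ℝ)) : ℝ :=
  ∑ i, |z.1 i| + ∑ j, |z.2 j|

lemma eabp_aux {n ν m : ℕ} (P : Fin n → Fin ν → Fin m → ℝ)
    (hP0 : ∀ i k j, 0 ≤ P i k j) (hP1 : ∀ i k, ∑ j, P i k j = 1)
    (A : Fin n → Fin ν → ℝ) :
    ∑ p, |(1 / 2 : ℝ) * ∑ i, ∑ j, P i j p * A i j| ≤ (1 / 2) * ∑ i, ∑ j, |A i j| := by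
  have h1 : ∀ p : Fin m, |(1 / 2 : ℝ) * ∑ i, ∑ j, P i j p * A i j|
      ≤ (1 / 2) * ∑ i, ∑ j, P i j p * |A i j| := by
    intro p
    rw [abs_mul, abs_of_nonneg (by norm_num : (0:ℝ) ≤ 1/2)]
    gcongr
    calc |∑ i, ∑ j, P i j p * A i j| ≤ ∑ i, |∑ j, P i j p * A i j| :=
          Finset.abs_sum_le_sum_abs _ _
      _ ≤ ∑ i, ∑ j, P i j p * |A i j| := by
          gcongr with i _
          calc |∑ j, P i j p * A i j| ≤ ∑ j, |P i j p * A i j| :=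
                Finset.abs_sum_le_sum_abs _ _
            _ = ∑ j, P i j p * |A i j| := by
                refine Finset.sum_congr rfl fun j _ => ?_
                rw [abs_mul, abs_of_nonneg (hP0 i j p)]
  calc ∑ p, |(1 / 2 : ℝ) * ∑ i, ∑ j, P i j p * A i j|
      ≤ ∑ p, (1 / 2 : ℝ) * ∑ i, ∑ j, P i j p * |A i j| :=
        Finset.sum_le_sum fun p _ => h1 p
    _ = (1 / 2) * ∑ i, ∑ j, |A i j| := by
        rw [← Finset.mul_sum]
        congr 1
        rw [Finset.sum_comm]
        refine Finset.sum_congr rfl fun i _ => ?_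
        rw [Finset.sum_comm]
        refine Finset.sum_congr rfl fun j _ => ?_
        rw [← Finset.sum_mul, hP1 i j, one_mul]

/-- The EABP is a (non-associative) Banach algebra: the ℓ¹ norm is submultiplicative. -/
theorem eabp_banach_algebra {n ν : ℕ} [NeZero n] [NeZero ν]
    (Pf : Fin n → Fin ν → Fin n → ℝ) (Pm : Fin n → Fin ν → Fin ν → ℝ)
    (hPf0 : ∀ i k j, 0 ≤ Pf i k j) (hPf1 : ∀ i k, ∑ j, Pf i k j = 1)
    (hPm0 : ∀ i k l, 0 ≤ Pm i k l) (hPm1 : ∀ i k, ∑ l, Pm i k l = 1)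
    (z t : (Fin n → ℝ) × (Fin ν → ℝ)) :
    bnorm (bmul Pf Pm z t) ≤ bnorm z * bnorm t := by
  set A : Fin n → Fin ν → ℝ := fun i j => z.1 i * t.2 j + t.1 i * z.2 j with hA
  have hmain : bnorm (bmul Pf Pm z t) ≤ ∑ i, ∑ j, |A i j| := by
    have hf := eabp_aux Pf hPf0 hPf1 A
    have hm := eabp_aux Pm hPm0 hPm1 A
    unfold bnorm bmul
    simp only [hA]
    linarith
  have hend : ∑ i, ∑ j, |A i j|
      ≤ (∑ i, |z.1 i|) * (∑ j, |t.2 j|) + (∑ i, |t.1 i|) * (∑ j, |z.2 j|) := by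
    calc ∑ i, ∑ j, |A i j|
        ≤ ∑ i, ∑ j, (|z.1 i| * |t.2 j| + |t.1 i| * |z.2 j|) := by
          gcongr with i _ j _
          calc |A i j| ≤ |z.1 i * t.2 j| + |t.1 i * z.2 j| := abs_add_le _ _
            _ = |z.1 i| * |t.2 j| + |t.1 i| * |z.2 j| := by rw [abs_mul, abs_mul]
      _ = (∑ i, |z.1 i|) * (∑ j, |t.2 j|) + (∑ i, |t.1 i|) * (∑ j, |z.2 j|) := by
          rw [Finset.sum_mul_sum, Finset.sum_mul_sum, ← Finset.sum_add_distrib]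
          exact Finset.sum_congr rfl fun i _ => Finset.sum_add_distrib
  refine hmain.trans (hend.trans ?_)
  unfold bnorm
  have h1 : (0:ℝ) ≤ ∑ i, |z.1 i| := Finset.sum_nonneg fun _ _ => abs_nonneg _
  have h2 : (0:ℝ) ≤ ∑ j, |z.2 j| := Finset.sum_nonneg fun _ _ => abs_nonneg _
  have h3 : (0:ℝ) ≤ ∑ i, |t.1 i| := Finset.sum_nonneg fun _ _ => abs_nonneg _
  have h4 : (0:ℝ) ≤ ∑ j, |t.2 j| := Finset.sum_nonneg fun _ _ => abs_nonneg _
  nlinarith [mul_nonneg h1 h3, mul_nonneg h2 h4]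
end

section
/- A linear map D : ℬ → ℬ with D(e^f_k) = Σ_{i=1}^n d^{ff}_{ki} e^f_i + Σ_{l=1}^ν d^{fm}_{kl} e^m_l (k = 1,…,n) and D(e^m_k) = Σ_{i=1}^n d^{mf}_{ki} e^f_i + Σ_{l=1}^ν d^{mm}_{kl} e^m_l (k = 1,…,ν) is a derivation of ℬ (i.e. D(zt) = D(z)t + zD(t) for all z, t ∈ ℬ) if and only if its matrix entries satisfy: (9) Σ_{l=1}^ν (d^{fm}_{kl} P^f_{jl,i} + d^{fm}_{jl} P^f_{kl,i}) = 0 for all i,j,k ∈ {1,…,n}, and Σ_{l=1}^ν (d^{fm}_{kl} P^m_{jl,q} + d^{fm}_{jl} P^m_{kl,q}) = 0 for all j,k ∈ {1,…,n}, q ∈ {1,…,ν}; (10) Σ_{i=1}^n (d^{mf}_{ki} P^f_{ij,s} + d^{mf}_{ji} P^f_{ik,s}) = 0 for all s ∈ {1,…,n}, j,k ∈ {1,…,ν}, and Σ_{i=1}^n (d^{mf}_{ki} P^m_{ij,q} + d^{mf}_{ji} P^m_{ik,q}) = 0 for all j,k,q ∈ {1,…,ν}; (11) Σ_{p=1}^n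 (d^{ff}_{ip} P^f_{pj,s} − d^{ff}_{ps} P^f_{ij,p}) + Σ_{q=1}^ν (d^{mm}_{jq} P^f_{iq,s} − d^{mf}_{qs} P^m_{ij,q}) = 0 for all i,s ∈ {1,…,n}, j ∈ {1,…,ν}, and Σ_{p=1}^n (d^{ff}_{ip} P^m_{pj,t} − d^{fm}_{pt} P^f_{ij,p}) + Σ_{q=1}^ν (d^{mm}_{jq} P^m_{iq,t} − d^{mm}_{qt} P^m_{ij,q}) = 0 for all i ∈ {1,…,n}, j,t ∈ {1,…,ν}. -/
open Finset

/-- The female basis element `e^f_i`. -/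
noncomputable def eF {n ν : ℕ} (i : Fin n) : (Fin n → ℝ) × (Fin ν → ℝ) :=
  (fun p => if p = i then 1 else 0, 0)

/-- The male basis element `e^m_k`. -/
noncomputable def eM {n ν : ℕ} (k : Fin ν) : (Fin n → ℝ) × (Fin ν → ℝ) :=
  (0, fun q => if q = k then 1 else 0)

section EabpAux

variable {n ν : ℕ} (Pf : Fin n → Fin ν → Fin n → ℝ) (Pm : Fin n → Fin ν → Fin ν → ℝ)

lemma eabp_bmul_comm (z t : (Fin n → ℝ) × (Fin ν → ℝ)) : bmul Pf Pm z t = bmul Pf Pm t z := by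
  unfold bmul
  refine Prod.ext ?_ ?_ <;> funext p <;> simp only <;>
    · congr 1
      refine Finset.sum_congr rfl fun a _ => Finset.sum_congr rfl fun b _ => ?_
      ring

lemma eabp_bmul_add_left (x y t : (Fin n → ℝ) × (Fin ν → ℝ)) :
    bmul Pf Pm (x + y) t = bmul Pf Pm x t + bmul Pf Pm y t := by
  unfold bmul
  refine Prod.ext ?_ ?_ <;> funext p <;>
    · simp only [Prod.fst_add, Prod.snd_add, Pi.add_apply, ← Finset.sum_add_distrib, ← mul_add]
      congr 1
      refine Finset.sum_congr rfl fun a _ => Finset.sum_congr rfl fun b _ => ?_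
      ring

lemma eabp_bmul_smul_left (c : ℝ) (x t : (Fin n → ℝ) × (Fin ν → ℝ)) :
    bmul Pf Pm (c • x) t = c • bmul Pf Pm x t := by
  unfold bmul
  refine Prod.ext ?_ ?_ <;> funext p <;>
    · simp only [Prod.smul_fst, Prod.smul_snd, Pi.smul_apply, smul_eq_mul]
      simp only [Finset.mul_sum]
      refine Finset.sum_congr rfl fun a _ => Finset.sum_congr rfl fun b _ => ?_
      ring

lemma eabp_decomp (z : (Fin n → ℝ) × (Fin ν → ℝ)) :
    z = (∑ i, z.1 i • eF i) + ∑ k, z.2 k • eM k := by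
  refine Prod.ext ?_ ?_ <;> funext p <;>
    simp [eF, eM, Finset.sum_apply, Pi.smul_apply, mul_ite, Finset.sum_ite_eq,
      Prod.fst_sum, Prod.snd_sum]

lemma eabp_bmul_x_eF (x : (Fin n → ℝ) × (Fin ν → ℝ)) (j : Fin n) :
    bmul Pf Pm x (eF j) =
      (fun s => (1/2) * ∑ b, Pf j b s * x.2 b, fun q => (1/2) * ∑ b, Pm j b q * x.2 b) := by
  unfold bmul eF
  refine Prod.ext ?_ ?_ <;> funext s <;> simp only <;>
    · congr 1
      rw [Finset.sum_comm]
      refine Finset.sum_congr rfl fun b _ => ?_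
      rw [Finset.sum_eq_single j] <;> simp +contextual

lemma eabp_bmul_x_eM (x : (Fin n → ℝ) × (Fin ν → ℝ)) (j : Fin ν) :
    bmul Pf Pm x (eM j) =
      (fun s => (1/2) * ∑ a, Pf a j s * x.1 a, fun q => (1/2) * ∑ a, Pm a j q * x.1 a) := by
  unfold bmul eM
  refine Prod.ext ?_ ?_ <;> funext s <;> simp only <;>
    · congr 1
      refine Finset.sum_congr rfl fun a _ => ?_
      rw [Finset.sum_eq_single j] <;> simp +contextual

variable (D : ((Fin n → ℝ) × (Fin ν → ℝ)) →ₗ[ℝ] ((Fin n → ℝ) × (Fin ν → ℝ)))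

lemma eabp_Dval (dff : Fin n → Fin n → ℝ) (dfm : Fin n → Fin ν → ℝ)
    (dmf : Fin ν → Fin n → ℝ) (dmm : Fin ν → Fin ν → ℝ)
    (hDf : ∀ k : Fin n, D (eF k) = (fun i => dff k i, fun l => dfm k l))
    (hDm : ∀ k : Fin ν, D (eM k) = (fun i => dmf k i, fun l => dmm k l))
    (v : (Fin n → ℝ) × (Fin ν → ℝ)) :
    D v = (fun s => (∑ p, v.1 p * dff p s) + ∑ q, v.2 q * dmf q s,
           fun t => (∑ p, v.1 p * dfm p t) + ∑ q, v.2 q * dmm q t) := by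
  conv_lhs => rw [eabp_decomp v]
  rw [map_add, map_sum, map_sum]
  simp only [map_smul, hDf, hDm]
  refine Prod.ext ?_ ?_ <;> funext s <;>
    simp [Prod.fst_sum, Prod.snd_sum, smul_eq_mul]

/-- The defect of the derivation identity, as a linear map in the first argument. -/
noncomputable def eabpPhi (t : (Fin n → ℝ) × (Fin ν → ℝ)) :
    ((Fin n → ℝ) × (Fin ν → ℝ)) →ₗ[ℝ] ((Fin n → ℝ) × (Fin ν → ℝ)) where
  toFun z := D (bmul Pf Pm z t) - (bmul Pf Pm (D z) t + bmul Pf Pm z (D t))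
  map_add' x y := by
    simp only [eabp_bmul_add_left, map_add]
    abel
  map_smul' c x := by
    simp only [eabp_bmul_smul_left, map_smul, RingHom.id_apply, smul_sub, smul_add]

lemma eabpPhi_eq_zero_iff (t z : (Fin n → ℝ) × (Fin ν → ℝ)) :
    eabpPhi Pf Pm D t z = 0 ↔
      D (bmul Pf Pm z t) = bmul Pf Pm (D z) t + bmul Pf Pm z (D t) := by
  simp [eabpPhi, sub_eq_zero]

lemma eabp_vanish (L : ((Fin n → ℝ) × (Fin ν → ℝ)) →ₗ[ℝ] ((Fin n → ℝ) × (Fin ν → ℝ)))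
    (h1 : ∀ i, L (eF i) = 0) (h2 : ∀ k, L (eM k) = 0)
    (z : (Fin n → ℝ) × (Fin ν → ℝ)) : L z = 0 := by
  conv_lhs => rw [eabp_decomp z]
  rw [map_add, map_sum, map_sum]
  simp [h1, h2]

lemma eabp_ident_symm {z t : (Fin n → ℝ) × (Fin ν → ℝ)}
    (h : D (bmul Pf Pm z t) = bmul Pf Pm (D z) t + bmul Pf Pm z (D t)) :
    D (bmul Pf Pm t z) = bmul Pf Pm (D t) z + bmul Pf Pm t (D z) := by
  rw [eabp_bmul_comm Pf Pm t z, h, eabp_bmul_comm Pf Pm (D t) z,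
    eabp_bmul_comm Pf Pm t (D z), add_comm]

end EabpAux

/-- A linear map `D` with matrix entries `dff, dfm, dmf, dmm` in the natural basis is a
derivation of the EABP if and only if the entries satisfy the relations (9), (10), (11). -/
theorem eabp_derivations {n ν : ℕ} [NeZero n] [NeZero ν]
    (Pf : Fin n → Fin ν → Fin n → ℝ) (Pm : Fin n → Fin ν → Fin ν → ℝ)
    (hPf0 : ∀ i k j, 0 ≤ Pf i k j) (hPf1 : ∀ i k, ∑ j, Pf i k j = 1)
    (hPm0 : ∀ i k l, 0 ≤ Pm i k l) (hPm1 : ∀ i k, ∑ l, Pm i k l = 1)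
    (D : ((Fin n → ℝ) × (Fin ν → ℝ)) →ₗ[ℝ] ((Fin n → ℝ) × (Fin ν → ℝ)))
    (dff : Fin n → Fin n → ℝ) (dfm : Fin n → Fin ν → ℝ)
    (dmf : Fin ν → Fin n → ℝ) (dmm : Fin ν → Fin ν → ℝ)
    (hDf : ∀ k : Fin n, D (eF k) = (fun i => dff k i, fun l => dfm k l))
    (hDm : ∀ k : Fin ν, D (eM k) = (fun i => dmf k i, fun l => dmm k l)) :
    (∀ z t, D (bmul Pf Pm z t) = bmul Pf Pm (D z) t + bmul Pf Pm z (D t)) ↔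
    ((∀ (i j k : Fin n), ∑ l, (dfm k l * Pf j l i + dfm j l * Pf k l i) = 0) ∧
     (∀ (j k : Fin n) (q : Fin ν), ∑ l, (dfm k l * Pm j l q + dfm j l * Pm k l q) = 0) ∧
     (∀ (s : Fin n) (j k : Fin ν), ∑ i, (dmf k i * Pf i j s + dmf j i * Pf i k s) = 0) ∧
     (∀ (j k q : Fin ν), ∑ i, (dmf k i * Pm i j q + dmf j i * Pm i k q) = 0) ∧
     (∀ (i s : Fin n) (j : Fin ν),
        ∑ p, (dff i p * Pf p j s - dff p s * Pf i j p) +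
          ∑ q, (dmm j q * Pf i q s - dmf q s * Pm i j q) = 0) ∧
     (∀ (i : Fin n) (j t : Fin ν),
        ∑ p, (dff i p * Pm p j t - dfm p t * Pf i j p) +
          ∑ q, (dmm j q * Pm i q t - dmm q t * Pm i j q) = 0)) := by
  -- the derivation identity on pairs of female basis vectors
  have hFF : ∀ k j : Fin n,
      (D (bmul Pf Pm (eF k) (eF j)) =
        bmul Pf Pm (D (eF k)) (eF j) + bmul Pf Pm (eF k) (D (eF j))) ↔
      ((∀ i, ∑ l, (dfm k l * Pf j l i + dfm j l * Pf k l i) = 0) ∧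
       (∀ q, ∑ l, (dfm k l * Pm j l q + dfm j l * Pm k l q) = 0)) := by
    intro k j
    have h0 : bmul Pf Pm (eF k) (eF j) = 0 := by
      rw [eabp_bmul_x_eF]
      refine Prod.ext ?_ ?_ <;> funext s <;> simp [eF]
    rw [h0, map_zero, hDf k, hDf j, eabp_bmul_comm Pf Pm (eF k), eabp_bmul_x_eF,
      eabp_bmul_x_eF, Prod.ext_iff]
    simp only [Prod.fst_add, Prod.snd_add, Pi.add_apply, Prod.fst_zero, Prod.snd_zero,
      Pi.zero_apply, funext_iff, eq_comm (a := (0:ℝ))]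
    constructor
    · rintro ⟨h1, h2⟩
      constructor
      · intro i
        have e : ∑ l, (dfm k l * Pf j l i + dfm j l * Pf k l i)
            = (∑ b, Pf j b i * dfm k b) + ∑ b, Pf k b i * dfm j b := by
          rw [Finset.sum_add_distrib]
          congr 1 <;> exact Finset.sum_congr rfl fun _ _ => mul_comm _ _
        have := h1 i; rw [e]; linarith
      · intro q
        have e : ∑ l, (dfm k l * Pm j l q + dfm j l * Pm k l q)
            = (∑ b, Pm j b q * dfm k b) + ∑ b, Pm k b q * dfm j b := by
          rw [Finset.sum_add_distrib]
          congr 1 <;> exact Finset.sum_congr rfl fun _ _ => mul_comm _ _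
        have := h2 q; rw [e]; linarith
    · rintro ⟨h1, h2⟩
      constructor
      · intro i
        have e : ∑ l, (dfm k l * Pf j l i + dfm j l * Pf k l i)
            = (∑ b, Pf j b i * dfm k b) + ∑ b, Pf k b i * dfm j b := by
          rw [Finset.sum_add_distrib]
          congr 1 <;> exact Finset.sum_congr rfl fun _ _ => mul_comm _ _
        have := h1 i; rw [e] at this; linarith
      · intro q
        have e : ∑ l, (dfm k l * Pm j l q + dfm j l * Pm k l q)
            = (∑ b, Pm j b q * dfm k b) + ∑ b, Pm k b q * dfm j b := by
          rw [Finset.sum_add_distrib]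
          congr 1 <;> exact Finset.sum_congr rfl fun _ _ => mul_comm _ _
        have := h2 q; rw [e] at this; linarith
  -- the derivation identity on pairs of male basis vectors
  have hMM : ∀ k j : Fin ν,
      (D (bmul Pf Pm (eM k) (eM j)) =
        bmul Pf Pm (D (eM k)) (eM j) + bmul Pf Pm (eM k) (D (eM j))) ↔
      ((∀ s, ∑ i, (dmf k i * Pf i j s + dmf j i * Pf i k s) = 0) ∧
       (∀ q, ∑ i, (dmf k i * Pm i j q + dmf j i * Pm i k q) = 0)) := by
    intro k j
    have h0 : bmul Pf Pm (eM k) (eM j) = 0 := by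
      rw [eabp_bmul_x_eM]
      refine Prod.ext ?_ ?_ <;> funext s <;> simp [eM]
    rw [h0, map_zero, hDm k, hDm j, eabp_bmul_comm Pf Pm (eM k), eabp_bmul_x_eM,
      eabp_bmul_x_eM, Prod.ext_iff]
    simp only [Prod.fst_add, Prod.snd_add, Pi.add_apply, Prod.fst_zero, Prod.snd_zero,
      Pi.zero_apply, funext_iff, eq_comm (a := (0:ℝ))]
    constructor
    · rintro ⟨h1, h2⟩
      constructor
      · intro s
        have e : ∑ i, (dmf k i * Pf i j s + dmf j i * Pf i k s)
            = (∑ a, Pf a j s * dmf k a) + ∑ a, Pf a k s * dmf j a := by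
          rw [Finset.sum_add_distrib]
          congr 1 <;> exact Finset.sum_congr rfl fun _ _ => mul_comm _ _
        have := h1 s; rw [e]; linarith
      · intro q
        have e : ∑ i, (dmf k i * Pm i j q + dmf j i * Pm i k q)
            = (∑ a, Pm a j q * dmf k a) + ∑ a, Pm a k q * dmf j a := by
          rw [Finset.sum_add_distrib]
          congr 1 <;> exact Finset.sum_congr rfl fun _ _ => mul_comm _ _
        have := h2 q; rw [e]; linarith
    · rintro ⟨h1, h2⟩
      constructor
      · intro s
        have e : ∑ i, (dmf k i * Pf i j s + dmf j i * Pf i k s)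
            = (∑ a, Pf a j s * dmf k a) + ∑ a, Pf a k s * dmf j a := by
          rw [Finset.sum_add_distrib]
          congr 1 <;> exact Finset.sum_congr rfl fun _ _ => mul_comm _ _
        have := h1 s; rw [e] at this; linarith
      · intro q
        have e : ∑ i, (dmf k i * Pm i j q + dmf j i * Pm i k q)
            = (∑ a, Pm a j q * dmf k a) + ∑ a, Pm a k q * dmf j a := by
          rw [Finset.sum_add_distrib]
          congr 1 <;> exact Finset.sum_congr rfl fun _ _ => mul_comm _ _
        have := h2 q; rw [e] at this; linarith
  -- the derivation identity on a mixed (female, male) pair of basis vectors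
  have hFM : ∀ (i : Fin n) (j : Fin ν),
      (D (bmul Pf Pm (eF i) (eM j)) =
        bmul Pf Pm (D (eF i)) (eM j) + bmul Pf Pm (eF i) (D (eM j))) ↔
      ((∀ s, ∑ p, (dff i p * Pf p j s - dff p s * Pf i j p) +
          ∑ q, (dmm j q * Pf i q s - dmf q s * Pm i j q) = 0) ∧
       (∀ t, ∑ p, (dff i p * Pm p j t - dfm p t * Pf i j p) +
          ∑ q, (dmm j q * Pm i q t - dmm q t * Pm i j q) = 0)) := by
    intro i j
    have h0 : bmul Pf Pm (eF i) (eM j) =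
        (fun s => (1/2) * Pf i j s, fun q => (1/2) * Pm i j q) := by
      rw [eabp_bmul_x_eM]
      refine Prod.ext ?_ ?_ <;> funext s <;> simp only <;>
        · congr 1
          rw [Finset.sum_eq_single i] <;> simp +contextual [eF]
    rw [h0, eabp_Dval D dff dfm dmf dmm hDf hDm, hDf i, hDm j,
      eabp_bmul_comm Pf Pm (eF i), eabp_bmul_x_eM, eabp_bmul_x_eF, Prod.ext_iff]
    simp only [Prod.fst_add, Prod.snd_add, Pi.add_apply, funext_iff]
    constructor
    · rintro ⟨h1, h2⟩
      constructor
      · intro s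
        have c1 : ∑ p, (dff i p * Pf p j s - dff p s * Pf i j p)
            = (∑ a, Pf a j s * dff i a) - 2 * ∑ p, 1/2 * Pf i j p * dff p s := by
          rw [Finset.sum_sub_distrib, Finset.mul_sum]
          congr 1
          · exact Finset.sum_congr rfl fun _ _ => mul_comm _ _
          · exact Finset.sum_congr rfl fun _ _ => by ring
        have c2 : ∑ q, (dmm j q * Pf i q s - dmf q s * Pm i j q)
            = (∑ b, Pf i b s * dmm j b) - 2 * ∑ q, 1/2 * Pm i j q * dmf q s := by
          rw [Finset.sum_sub_distrib, Finset.mul_sum]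
          congr 1
          · exact Finset.sum_congr rfl fun _ _ => mul_comm _ _
          · exact Finset.sum_congr rfl fun _ _ => by ring
        have := h1 s; rw [c1, c2]; linarith
      · intro t
        have c1 : ∑ p, (dff i p * Pm p j t - dfm p t * Pf i j p)
            = (∑ a, Pm a j t * dff i a) - 2 * ∑ p, 1/2 * Pf i j p * dfm p t := by
          rw [Finset.sum_sub_distrib, Finset.mul_sum]
          congr 1
          · exact Finset.sum_congr rfl fun _ _ => mul_comm _ _
          · exact Finset.sum_congr rfl fun _ _ => by ring
        have c2 : ∑ q, (dmm j q * Pm i q t - dmm q t * Pm i j q)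
            = (∑ b, Pm i b t * dmm j b) - 2 * ∑ q, 1/2 * Pm i j q * dmm q t := by
          rw [Finset.sum_sub_distrib, Finset.mul_sum]
          congr 1
          · exact Finset.sum_congr rfl fun _ _ => mul_comm _ _
          · exact Finset.sum_congr rfl fun _ _ => by ring
        have := h2 t; rw [c1, c2]; linarith
    · rintro ⟨h1, h2⟩
      constructor
      · intro s
        have c1 : ∑ p, (dff i p * Pf p j s - dff p s * Pf i j p)
            = (∑ a, Pf a j s * dff i a) - 2 * ∑ p, 1/2 * Pf i j p * dff p s := by
          rw [Finset.sum_sub_distrib, Finset.mul_sum]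
          congr 1
          · exact Finset.sum_congr rfl fun _ _ => mul_comm _ _
          · exact Finset.sum_congr rfl fun _ _ => by ring
        have c2 : ∑ q, (dmm j q * Pf i q s - dmf q s * Pm i j q)
            = (∑ b, Pf i b s * dmm j b) - 2 * ∑ q, 1/2 * Pm i j q * dmf q s := by
          rw [Finset.sum_sub_distrib, Finset.mul_sum]
          congr 1
          · exact Finset.sum_congr rfl fun _ _ => mul_comm _ _
          · exact Finset.sum_congr rfl fun _ _ => by ring
        have := h1 s; rw [c1, c2] at this; linarith
      · intro t
        have c1 : ∑ p, (dff i p * Pm p j t - dfm p t * Pf i j p)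
            = (∑ a, Pm a j t * dff i a) - 2 * ∑ p, 1/2 * Pf i j p * dfm p t := by
          rw [Finset.sum_sub_distrib, Finset.mul_sum]
          congr 1
          · exact Finset.sum_congr rfl fun _ _ => mul_comm _ _
          · exact Finset.sum_congr rfl fun _ _ => by ring
        have c2 : ∑ q, (dmm j q * Pm i q t - dmm q t * Pm i j q)
            = (∑ b, Pm i b t * dmm j b) - 2 * ∑ q, 1/2 * Pm i j q * dmm q t := by
          rw [Finset.sum_sub_distrib, Finset.mul_sum]
          congr 1
          · exact Finset.sum_congr rfl fun _ _ => mul_comm _ _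
          · exact Finset.sum_congr rfl fun _ _ => by ring
        have := h2 t; rw [c1, c2] at this; linarith
  constructor
  · intro h
    exact ⟨fun i j k => ((hFF k j).mp (h _ _)).1 i,
           fun j k q => ((hFF k j).mp (h _ _)).2 q,
           fun s j k => ((hMM k j).mp (h _ _)).1 s,
           fun j k q => ((hMM k j).mp (h _ _)).2 q,
           fun i s j => ((hFM i j).mp (h _ _)).1 s,
           fun i j t => ((hFM i j).mp (h _ _)).2 t⟩
  · rintro ⟨h9a, h9b, h10a, h10b, h11a, h11b⟩
    have bFF : ∀ k j : Fin n, D (bmul Pf Pm (eF k) (eF j)) =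
        bmul Pf Pm (D (eF k)) (eF j) + bmul Pf Pm (eF k) (D (eF j)) :=
      fun k j => (hFF k j).mpr ⟨fun i => h9a i j k, fun q => h9b j k q⟩
    have bMM : ∀ k j : Fin ν, D (bmul Pf Pm (eM k) (eM j)) =
        bmul Pf Pm (D (eM k)) (eM j) + bmul Pf Pm (eM k) (D (eM j)) :=
      fun k j => (hMM k j).mpr ⟨fun s => h10a s j k, fun q => h10b j k q⟩
    have bFM : ∀ (i : Fin n) (j : Fin ν), D (bmul Pf Pm (eF i) (eM j)) =
        bmul Pf Pm (D (eF i)) (eM j) + bmul Pf Pm (eF i) (D (eM j)) :=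
      fun i j => (hFM i j).mpr ⟨fun s => h11a i s j, fun t => h11b i j t⟩
    have bMF : ∀ (j : Fin ν) (i : Fin n), D (bmul Pf Pm (eM j) (eF i)) =
        bmul Pf Pm (D (eM j)) (eF i) + bmul Pf Pm (eM j) (D (eF i)) :=
      fun j i => eabp_ident_symm Pf Pm D (bFM i j)
    -- step 1: the identity holds whenever the second argument is a basis vector
    have step1F : ∀ (j : Fin n) z, D (bmul Pf Pm z (eF j)) =
        bmul Pf Pm (D z) (eF j) + bmul Pf Pm z (D (eF j)) := by
      intro j z
      refine (eabpPhi_eq_zero_iff Pf Pm D (eF j) z).mp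
        (eabp_vanish _ (fun i => (eabpPhi_eq_zero_iff Pf Pm D (eF j) (eF i)).mpr (bFF i j))
          (fun k => (eabpPhi_eq_zero_iff Pf Pm D (eF j) (eM k)).mpr (bMF k j)) z)
    have step1M : ∀ (j : Fin ν) z, D (bmul Pf Pm z (eM j)) =
        bmul Pf Pm (D z) (eM j) + bmul Pf Pm z (D (eM j)) := by
      intro j z
      refine (eabpPhi_eq_zero_iff Pf Pm D (eM j) z).mp
        (eabp_vanish _ (fun i => (eabpPhi_eq_zero_iff Pf Pm D (eM j) (eF i)).mpr (bFM i j))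
          (fun k => (eabpPhi_eq_zero_iff Pf Pm D (eM j) (eM k)).mpr (bMM k j)) z)
    -- step 2: the identity holds in general
    intro z t
    refine (eabpPhi_eq_zero_iff Pf Pm D t z).mp
      (eabp_vanish _
        (fun i => (eabpPhi_eq_zero_iff Pf Pm D t (eF i)).mpr
          (eabp_ident_symm Pf Pm D (step1F i t)))
        (fun k => (eabpPhi_eq_zero_iff Pf Pm D t (eM k)).mpr
          (eabp_ident_symm Pf Pm D (step1M k t))) z)
end

section
/- Along any trajectory z^(t) = V(z^(t−1)) of the evolution operator V with initial point z^(0) = (x^(0), y^(0)), one has for all t ≥ 1: X(x^(t)) = Y(y^(t)) = (X(x^(0))·Y(y^(0)))^{2^{t−1}}. -/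
open Finset

/-- The evolution operator `V` of a bisexual population:
`x'_j = Σ_{i,k} P^f_{ik,j} x_i y_k`, `y'_l = Σ_{i,k} P^m_{ik,l} x_i y_k`. -/
noncomputable def Vmap {n ν : ℕ} (Pf : Fin n → Fin ν → Fin n → ℝ)
    (Pm : Fin n → Fin ν → Fin ν → ℝ)
    (z : (Fin n → ℝ) × (Fin ν → ℝ)) : (Fin n → ℝ) × (Fin ν → ℝ) :=
  (fun j => ∑ i, ∑ k, Pf i k j * z.1 i * z.2 k,
   fun l => ∑ i, ∑ k, Pm i k l * z.1 i * z.2 k)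

lemma Vmap_sum_fst {n ν : ℕ} (Pf : Fin n → Fin ν → Fin n → ℝ)
    (Pm : Fin n → Fin ν → Fin ν → ℝ) (hPf1 : ∀ i k, ∑ j, Pf i k j = 1)
    (z : (Fin n → ℝ) × (Fin ν → ℝ)) :
    ∑ j, (Vmap Pf Pm z).1 j = (∑ i, z.1 i) * (∑ k, z.2 k) := by
  show ∑ j, ∑ i, ∑ k, Pf i k j * z.1 i * z.2 k = _
  rw [Finset.sum_comm, Finset.sum_mul_sum]
  refine Finset.sum_congr rfl fun i _ => ?_
  rw [Finset.sum_comm]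
  refine Finset.sum_congr rfl fun k _ => ?_
  rw [← Finset.sum_mul, ← Finset.sum_mul, hPf1, one_mul]

lemma Vmap_sum_snd {n ν : ℕ} (Pf : Fin n → Fin ν → Fin n → ℝ)
    (Pm : Fin n → Fin ν → Fin ν → ℝ) (hPm1 : ∀ i k, ∑ l, Pm i k l = 1)
    (z : (Fin n → ℝ) × (Fin ν → ℝ)) :
    ∑ l, (Vmap Pf Pm z).2 l = (∑ i, z.1 i) * (∑ k, z.2 k) := by
  show ∑ l, ∑ i, ∑ k, Pm i k l * z.1 i * z.2 k = _
  rw [Finset.sum_comm, Finset.sum_mul_sum]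
  refine Finset.sum_congr rfl fun i _ => ?_
  rw [Finset.sum_comm]
  refine Finset.sum_congr rfl fun k _ => ?_
  rw [← Finset.sum_mul, ← Finset.sum_mul, hPm1, one_mul]
/-- Along any trajectory `z⁽ᵗ⁾ = V(z⁽ᵗ⁻¹⁾)` of the evolution operator, for all `t ≥ 1`,
`X(x⁽ᵗ⁾) = Y(y⁽ᵗ⁾) = (X(x⁽⁰⁾)·Y(y⁽⁰⁾))^(2^(t-1))`. -/
theorem eabp_trajectory_sums {n ν : ℕ} [NeZero n] [NeZero ν]
    (Pf : Fin n → Fin ν → Fin n → ℝ) (Pm : Fin n → Fin ν → Fin ν → ℝ)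
    (hPf0 : ∀ i k j, 0 ≤ Pf i k j) (hPf1 : ∀ i k, ∑ j, Pf i k j = 1)
    (hPm0 : ∀ i k l, 0 ≤ Pm i k l) (hPm1 : ∀ i k, ∑ l, Pm i k l = 1)
    (z : ℕ → (Fin n → ℝ) × (Fin ν → ℝ))
    (hz : ∀ t, z (t + 1) = Vmap Pf Pm (z t)) :
    ∀ t : ℕ, 1 ≤ t →
      (∑ i, (z t).1 i = ((∑ i, (z 0).1 i) * (∑ k, (z 0).2 k)) ^ 2 ^ (t - 1)) ∧
      (∑ k, (z t).2 k = ((∑ i, (z 0).1 i) * (∑ k, (z 0).2 k)) ^ 2 ^ (t - 1)) := by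
  intro t ht
  induction t with
  | zero => omega
  | succ t ih =>
    rcases Nat.eq_zero_or_pos t with rfl | h1
    · rw [hz]
      simp [Vmap_sum_fst Pf Pm hPf1, Vmap_sum_snd Pf Pm hPm1]
    · have ht' : 1 ≤ t := h1
      obtain ⟨h1, h2⟩ := ih ht'
      have key : ∑ i, (z (t+1)).1 i = ((∑ i, (z 0).1 i) * (∑ k, (z 0).2 k)) ^ 2 ^ t ∧
          ∑ k, (z (t+1)).2 k = ((∑ i, (z 0).1 i) * (∑ k, (z 0).2 k)) ^ 2 ^ t := by
        rw [hz, Vmap_sum_fst Pf Pm hPf1, Vmap_sum_snd Pf Pm hPm1, h1, h2, ← pow_add]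
        have : 2 ^ (t - 1) + 2 ^ (t - 1) = 2 ^ t := by
          obtain ⟨s, rfl⟩ := Nat.exists_eq_add_of_le ht'
          simp [pow_succ]; ring
        rw [this]
        exact ⟨rfl, rfl⟩
      simpa using key
end

section
/- Along any trajectory z^(t) = V(z^(t−1)) with initial point z^(0) = (x^(0), y^(0)), the sequences X(x^(t)) and Y(y^(t)) both converge to 0 if |X(x^(0))·Y(y^(0))| < 1, both converge to 1 if |X(x^(0))·Y(y^(0))| = 1, and both tend to +∞ if |X(x^(0))·Y(y^(0))| > 1. Consequently every limit point of the trajectory lies in H_0 in the first case and in H_1 in the second case. -/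
open Finset

open Filter Topology

private lemma clusterPt_eq_of_tendsto' {x L : ℝ} {F : Filter ℕ} {u : ℕ → ℝ}
    (h : MapClusterPt x F u) (hT : Tendsto u F (𝓝 L)) : x = L :=
  eq_of_nhds_neBot (Filter.NeBot.mono h (inf_le_inf_left _ hT))

private lemma sum_markov {n ν m : ℕ} (P : Fin n → Fin ν → Fin m → ℝ)
    (hP1 : ∀ i k, ∑ j, P i k j = 1) (x : Fin n → ℝ) (y : Fin ν → ℝ) :
    ∑ j, ∑ i, ∑ k, P i k j * x i * y k = (∑ i, x i) * (∑ k, y k) := by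
  rw [Finset.sum_comm, Finset.sum_mul]
  refine Finset.sum_congr rfl fun i _ => ?_
  rw [Finset.sum_comm, Finset.mul_sum]
  refine Finset.sum_congr rfl fun k _ => ?_
  rw [← Finset.sum_mul, ← Finset.sum_mul, hP1]
  ring

/-- Along any trajectory of the evolution operator, the coordinate sums `X(x⁽ᵗ⁾)`, `Y(y⁽ᵗ⁾)`
converge to `0` if `|X(x⁽⁰⁾)Y(y⁽⁰⁾)| < 1`, to `1` if `|X(x⁽⁰⁾)Y(y⁽⁰⁾)| = 1`, and tend to
`+∞` if `|X(x⁽⁰⁾)Y(y⁽⁰⁾)| > 1`; consequently every limit point of the trajectory lies in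
`H₀` in the first case and in `H₁` in the second case. -/
theorem eabp_omega_limit {n ν : ℕ} [NeZero n] [NeZero ν]
    (Pf : Fin n → Fin ν → Fin n → ℝ) (Pm : Fin n → Fin ν → Fin ν → ℝ)
    (hPf0 : ∀ i k j, 0 ≤ Pf i k j) (hPf1 : ∀ i k, ∑ j, Pf i k j = 1)
    (hPm0 : ∀ i k l, 0 ≤ Pm i k l) (hPm1 : ∀ i k, ∑ l, Pm i k l = 1)
    (z : ℕ → (Fin n → ℝ) × (Fin ν → ℝ))
    (hz : ∀ t, z (t + 1) = Vmap Pf Pm (z t))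
    (c : ℝ) (hc : c = (∑ i, (z 0).1 i) * (∑ k, (z 0).2 k)) :
    (|c| < 1 →
      Tendsto (fun t => ∑ i, (z t).1 i) atTop (𝓝 0) ∧
      Tendsto (fun t => ∑ k, (z t).2 k) atTop (𝓝 0) ∧
      ∀ w : (Fin n → ℝ) × (Fin ν → ℝ), MapClusterPt w atTop z →
        (∑ i, w.1 i = 0 ∧ ∑ k, w.2 k = 0)) ∧
    (|c| = 1 →
      Tendsto (fun t => ∑ i, (z t).1 i) atTop (𝓝 1) ∧
      Tendsto (fun t => ∑ k, (z t).2 k) atTop (𝓝 1) ∧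
      ∀ w : (Fin n → ℝ) × (Fin ν → ℝ), MapClusterPt w atTop z →
        (∑ i, w.1 i = 1 ∧ ∑ k, w.2 k = 1)) ∧
    (1 < |c| →
      Tendsto (fun t => ∑ i, (z t).1 i) atTop atTop ∧
      Tendsto (fun t => ∑ k, (z t).2 k) atTop atTop) := by
  set X : ℕ → ℝ := fun t => ∑ i, (z t).1 i with hX
  set Y : ℕ → ℝ := fun t => ∑ k, (z t).2 k with hY
  have hXs : ∀ t, X (t + 1) = X t * Y t := by
    intro t
    simp only [hX, hY, hz t, Vmap]
    exact sum_markov Pf hPf1 _ _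
  have hYs : ∀ t, Y (t + 1) = X t * Y t := by
    intro t
    simp only [hX, hY, hz t, Vmap]
    exact sum_markov Pm hPm1 _ _
  have hpow : ∀ t, X (t + 1) = c ^ (2 ^ t) ∧ Y (t + 1) = c ^ (2 ^ t) := by
    intro t
    induction t with
    | zero => simp [hXs 0, hYs 0, hc]; rfl
    | succ t ih =>
      have h2 : c ^ 2 ^ t * c ^ 2 ^ t = c ^ 2 ^ (t + 1) := by
        rw [← pow_add, pow_succ, mul_two]
      exact ⟨by rw [hXs, ih.1, ih.2, h2], by rw [hYs, ih.1, ih.2, h2]⟩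
  -- shifted sequences: for t ≥ 0, X (t+2) = (c^2)^(2^t)
  have hshift : ∀ t, X (t + 2) = (c ^ 2) ^ (2 ^ t) ∧ Y (t + 2) = (c ^ 2) ^ (2 ^ t) := by
    intro t
    have := hpow (t + 1)
    have h1 : c ^ 2 ^ (t + 1) = (c ^ 2) ^ 2 ^ t := by
      rw [← pow_mul, pow_succ, mul_comm]
    exact ⟨by rw [this.1, h1], by rw [this.2, h1]⟩
  have hcomp : Tendsto (fun t : ℕ => (2 : ℕ) ^ t) atTop atTop :=
    tendsto_pow_atTop_atTop_of_one_lt one_lt_two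
  refine ⟨?_, ?_, ?_⟩
  · intro h
    have h1 : |c ^ 2| < 1 := by
      rw [abs_pow]; exact pow_lt_one₀ (abs_nonneg c) h two_ne_zero
    have hbase : Tendsto (fun m : ℕ => (c ^ 2) ^ m) atTop (𝓝 0) :=
      tendsto_pow_atTop_nhds_zero_of_abs_lt_one h1
    have hXt : Tendsto X atTop (𝓝 0) := by
      refine (tendsto_add_atTop_iff_nat 2).mp ?_
      refine (hbase.comp hcomp).congr fun t => ?_
      exact ((hshift t).1).symm
    have hYt : Tendsto Y atTop (𝓝 0) := by
      refine (tendsto_add_atTop_iff_nat 2).mp ?_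
      refine (hbase.comp hcomp).congr fun t => ?_
      exact ((hshift t).2).symm
    refine ⟨hXt, hYt, fun w hw => ?_⟩
    constructor
    · exact clusterPt_eq_of_tendsto'
        (MapClusterPt.continuousAt_comp
          (f := fun p : (Fin n → ℝ) × (Fin ν → ℝ) => ∑ i, p.1 i) (by fun_prop) hw) hXt
    · exact clusterPt_eq_of_tendsto'
        (MapClusterPt.continuousAt_comp
          (f := fun p : (Fin n → ℝ) × (Fin ν → ℝ) => ∑ k, p.2 k) (by fun_prop) hw) hYt
  · intro h
    have h1 : c ^ 2 = 1 := by
      have := sq_abs c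
      rw [h] at this
      nlinarith
    have hXt : Tendsto X atTop (𝓝 1) := by
      refine (tendsto_add_atTop_iff_nat 2).mp ?_
      refine tendsto_const_nhds.congr fun t => ?_
      rw [(hshift t).1, h1, one_pow]
    have hYt : Tendsto Y atTop (𝓝 1) := by
      refine (tendsto_add_atTop_iff_nat 2).mp ?_
      refine tendsto_const_nhds.congr fun t => ?_
      rw [(hshift t).2, h1, one_pow]
    refine ⟨hXt, hYt, fun w hw => ?_⟩
    constructor
    · exact clusterPt_eq_of_tendsto'
        (MapClusterPt.continuousAt_comp
          (f := fun p : (Fin n → ℝ) × (Fin ν → ℝ) => ∑ i, p.1 i) (by fun_prop) hw) hXt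
    · exact clusterPt_eq_of_tendsto'
        (MapClusterPt.continuousAt_comp
          (f := fun p : (Fin n → ℝ) × (Fin ν → ℝ) => ∑ k, p.2 k) (by fun_prop) hw) hYt
  · intro h
    have h1 : 1 < c ^ 2 := by nlinarith [sq_abs c, abs_nonneg c]
    have hbase : Tendsto (fun m : ℕ => (c ^ 2) ^ m) atTop atTop :=
      tendsto_pow_atTop_atTop_of_one_lt h1
    constructor
    · refine (tendsto_add_atTop_iff_nat 2).mp ?_
      refine (hbase.comp hcomp).congr fun t => ((hshift t).1).symm
    · refine (tendsto_add_atTop_iff_nat 2).mp ?_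
      refine (hbase.comp hcomp).congr fun t => ((hshift t).2).symm
end

section
/- In the special evolution algebra ℬ₁ with A and B the identity matrices (a_{ij} = δ_{ij}, b_{kl} = δ_{kl}), an element z = (x,y) ∈ ℝ^{n+ν} is idempotent (z² = z) if and only if z belongs to the union of the following sets: {0}; {((1, x_2,…,x_n), (1, y_2,…,y_ν)) : Σ_{i=2}^n x_i = Σ_{k=2}^ν y_k = 0}; {((1, x_2,…,x_n), (1, y_2,…,y_ν)) : Σ_{i=2}^n x_i = Σ_{k=2}^ν y_k = −1}; {((1,0,…,0), (y_1,…,y_ν)) : Σ_{k=1}^ν y_k = 1, y_1 ≠ 1}; {((x_1,…,x_n), (1,0,…,0)) : Σ_{i=1}^n x_i = 1, x_1 ≠ 1}. -/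
open Finset

/-- The squaring map (evolution operator) of the special evolution algebra `ℬ₁` of a
bisexual population determined by an `n×n` matrix `A` and a `ν×ν` matrix `B`:
`x'_1 = Σᵢ (a_{i1} y₁ + Σ_{k≥2} y_k) xᵢ`, `x'_j = y₁ Σᵢ a_{ij} xᵢ` for `j ≠ 1`,
`y'_1 = Σₖ (b_{k1} x₁ + Σ_{i≥2} xᵢ) y_k`, `y'_l = x₁ Σₖ b_{kl} y_k` for `l ≠ 1`. -/
noncomputable def V1 {n ν : ℕ} [NeZero n] [NeZero ν]
    (A : Fin n → Fin n → ℝ) (B : Fin ν → Fin ν → ℝ)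
    (z : (Fin n → ℝ) × (Fin ν → ℝ)) : (Fin n → ℝ) × (Fin ν → ℝ) :=
  (fun j => if j = 0 then
      ∑ i, (A i 0 * z.2 0 + ∑ k ∈ Finset.univ.erase 0, z.2 k) * z.1 i
    else z.2 0 * ∑ i, A i j * z.1 i,
   fun l => if l = 0 then
      ∑ k, (B k 0 * z.1 0 + ∑ i ∈ Finset.univ.erase 0, z.1 i) * z.2 k
    else z.1 0 * ∑ k, B k l * z.2 k)

/-- In `ℬ₁` with `A` and `B` the identity matrices, `z = (x,y)` is idempotent iff it
belongs to the union of the five sets: `{0}`;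
`{((1,x₂,…,xₙ),(1,y₂,…,y_ν)) : Σ_{i≥2} xᵢ = Σ_{k≥2} y_k = 0}`;
`{((1,x₂,…,xₙ),(1,y₂,…,y_ν)) : Σ_{i≥2} xᵢ = Σ_{k≥2} y_k = -1}`;
`{((1,0,…,0),y) : Σ_k y_k = 1, y₁ ≠ 1}`;
`{(x,(1,0,…,0)) : Σ_i xᵢ = 1, x₁ ≠ 1}`. -/
theorem b1_idempotents_identity_case {n ν : ℕ} [NeZero n] [NeZero ν]
    (A : Fin n → Fin n → ℝ) (B : Fin ν → Fin ν → ℝ)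
    (hA : ∀ i j, A i j = if i = j then 1 else 0)
    (hB : ∀ k l, B k l = if k = l then 1 else 0)
    (z : (Fin n → ℝ) × (Fin ν → ℝ)) :
    V1 A B z = z ↔
      (z = 0 ∨
       (z.1 0 = 1 ∧ z.2 0 = 1 ∧
         ∑ i ∈ Finset.univ.erase 0, z.1 i = 0 ∧ ∑ k ∈ Finset.univ.erase 0, z.2 k = 0) ∨
       (z.1 0 = 1 ∧ z.2 0 = 1 ∧
         ∑ i ∈ Finset.univ.erase 0, z.1 i = -1 ∧ ∑ k ∈ Finset.univ.erase 0, z.2 k = -1) ∨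
       ((z.1 = fun i => if i = 0 then 1 else 0) ∧ ∑ k, z.2 k = 1 ∧ z.2 0 ≠ 1) ∨
       ((z.2 = fun k => if k = 0 then 1 else 0) ∧ ∑ i, z.1 i = 1 ∧ z.1 0 ≠ 1)) := by
  obtain ⟨x, y⟩ := z
  simp only
  set Sx := ∑ i ∈ Finset.univ.erase 0, x i with hSxdef
  set Sy := ∑ k ∈ Finset.univ.erase 0, y k with hSydef
  have hTx : ∑ i, x i = x 0 + Sx := (Finset.add_sum_erase _ x (Finset.mem_univ 0)).symm
  have hTy : ∑ k, y k = y 0 + Sy := (Finset.add_sum_erase _ y (Finset.mem_univ 0)).symm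
  have hsumA : ∀ j, ∑ i, A i j * x i = x j := by
    intro j
    simp [hA, ite_mul, Finset.sum_ite_eq']
  have hsumB : ∀ l, ∑ k, B k l * y k = y l := by
    intro l
    simp [hB, ite_mul, Finset.sum_ite_eq']
  have e1 : ∑ i, (A i 0 * y 0 + Sy) * x i = y 0 * x 0 + Sy * (x 0 + Sx) := by
    simp only [add_mul, Finset.sum_add_distrib, ← Finset.mul_sum]
    rw [← hTx]
    congr 1
    simp [hA, ite_mul, Finset.sum_ite_eq', mul_comm]
  have e2 : ∑ k, (B k 0 * x 0 + Sx) * y k = x 0 * y 0 + Sx * (y 0 + Sy) := by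
    simp only [add_mul, Finset.sum_add_distrib, ← Finset.mul_sum]
    rw [← hTy]
    congr 1
    simp [hB, ite_mul, Finset.sum_ite_eq', mul_comm]
  have key : V1 A B (x, y) = (x, y) ↔
      (y 0 * x 0 + Sy * (x 0 + Sx) = x 0 ∧ (∀ j, j ≠ 0 → y 0 * x j = x j) ∧
       x 0 * y 0 + Sx * (y 0 + Sy) = y 0 ∧ (∀ l, l ≠ 0 → x 0 * y l = y l)) := by
    rw [V1, Prod.mk.injEq, funext_iff, funext_iff]
    constructor
    · rintro ⟨h1, h2⟩
      refine ⟨?_, ?_, ?_, ?_⟩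
      · have := h1 0; rw [if_pos rfl, e1] at this; exact this
      · intro j hj; have := h1 j; rw [if_neg hj, hsumA] at this; exact this
      · have := h2 0; rw [if_pos rfl, e2] at this; exact this
      · intro l hl; have := h2 l; rw [if_neg hl, hsumB] at this; exact this
    · rintro ⟨h1, h2, h3, h4⟩
      constructor
      · intro j
        by_cases hj : j = 0
        · subst hj; rw [if_pos rfl, e1]; exact h1
        · rw [if_neg hj, hsumA]; exact h2 j hj
      · intro l
        by_cases hl : l = 0
        · subst hl; rw [if_pos rfl, e2]; exact h3
        · rw [if_neg hl, hsumB]; exact h4 l hl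
  rw [key]
  constructor
  · rintro ⟨h1, h2, h3, h4⟩
    by_cases hy0 : y 0 = 1
    · by_cases hx0 : x 0 = 1
      · -- sets 2 or 3
        rw [hy0, hx0] at h1 h3
        have hA' : Sy * (1 + Sx) = 0 := by linarith
        have hB' : Sx * (1 + Sy) = 0 := by linarith
        rcases mul_eq_zero.1 hA' with hSy | hSx1
        · have hSx : Sx = 0 := by
            rcases mul_eq_zero.1 hB' with h | h
            · exact h
            · exfalso; rw [hSy] at h; norm_num at h
          exact Or.inr (Or.inl ⟨hx0, hy0, hSx, hSy⟩)
        · have hSx : Sx = -1 := by linarith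
          have hSy : Sy = -1 := by
            rcases mul_eq_zero.1 hB' with h | h
            · exfalso; rw [h] at hSx; norm_num at hSx
            · linarith
          exact Or.inr (Or.inr (Or.inl ⟨hx0, hy0, hSx, hSy⟩))
      · -- set 5
        have hyl : ∀ l, l ≠ 0 → y l = 0 := by
          intro l hl
          have := h4 l hl
          by_contra hne
          exact hx0 (mul_right_cancel₀ hne (this.trans (one_mul _).symm))
        have hyfun : y = fun k => if k = 0 then 1 else 0 := by
          funext k
          by_cases hk : k = 0
          · simp [hk, hy0]
          · simp [hk, hyl k hk]
        have hSy0 : Sy = 0 := by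
          rw [hSydef]
          exact Finset.sum_eq_zero fun k hk => hyl k (Finset.mem_erase.1 hk).1
        have : ∑ i, x i = 1 := by
          rw [hTx]
          rw [hy0, hSy0] at h3
          linarith
        exact Or.inr (Or.inr (Or.inr (Or.inr ⟨hyfun, this, hx0⟩)))
    · -- y 0 ≠ 1
      have hxj : ∀ j, j ≠ 0 → x j = 0 := by
        intro j hj
        have := h2 j hj
        by_contra hne
        exact hy0 (mul_right_cancel₀ hne (this.trans (one_mul _).symm))
      have hSx0 : Sx = 0 := by
        rw [hSxdef]
        exact Finset.sum_eq_zero fun i hi => hxj i (Finset.mem_erase.1 hi).1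
      by_cases hx0 : x 0 = 1
      · -- set 4
        have hxfun : x = fun i => if i = 0 then 1 else 0 := by
          funext i
          by_cases hi : i = 0
          · simp [hi, hx0]
          · simp [hi, hxj i hi]
        have : ∑ k, y k = 1 := by
          rw [hTy]
          rw [hx0, hSx0] at h1
          linarith
        exact Or.inr (Or.inr (Or.inr (Or.inl ⟨hxfun, this, hy0⟩)))
      · -- zero
        have hyl : ∀ l, l ≠ 0 → y l = 0 := by
          intro l hl
          have := h4 l hl
          by_contra hne
          exact hx0 (mul_right_cancel₀ hne (this.trans (one_mul _).symm))
        have hSy0 : Sy = 0 := by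
          rw [hSydef]
          exact Finset.sum_eq_zero fun k hk => hyl k (Finset.mem_erase.1 hk).1
        rw [hSx0, hSy0] at h1 h3
        have hx00 : x 0 = 0 := by
          by_contra hne
          exact hy0 (mul_left_cancel₀ hne (by rw [mul_one]; linarith))
        have hy00 : y 0 = 0 := by rw [hx00] at h3; linarith
        left
        rw [Prod.mk_eq_zero]
        constructor
        · funext i
          by_cases hi : i = 0
          · simp [hi, hx00]
          · simp [hxj i hi]
        · funext l
          by_cases hl : l = 0
          · simp [hl, hy00]
          · simp [hyl l hl]
  · -- reverse
    rintro (h | ⟨hx0, hy0, hSx, hSy⟩ | ⟨hx0, hy0, hSx, hSy⟩ | ⟨hxfun, hTy1, hy0⟩ | ⟨hyfun, hTx1, hx0⟩)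
    · have hx : x = 0 := congrArg Prod.fst h
      have hy : y = 0 := congrArg Prod.snd h
      subst hx; subst hy
      simp [hSxdef, hSydef]
    · refine ⟨?_, ?_, ?_, ?_⟩ <;> simp [hx0, hy0, hSx, hSy]
    · refine ⟨?_, ?_, ?_, ?_⟩ <;> simp [hx0, hy0, hSx, hSy]
    · have hx0 : x 0 = 1 := by rw [hxfun]; simp
      have hSx0 : Sx = 0 := by
        rw [hSxdef, hxfun]
        exact Finset.sum_eq_zero fun i hi => by simp [(Finset.mem_erase.1 hi).1]
      rw [hTy] at hTy1
      refine ⟨?_, ?_, ?_, ?_⟩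
      · rw [hx0, hSx0]; ring_nf; linarith
      · intro j hj; rw [hxfun]; simp [hj]
      · rw [hx0, hSx0]; ring
      · intro l hl; rw [hx0]; ring
    · have hy00 : y 0 = 1 := by rw [hyfun]; simp
      have hSy0 : Sy = 0 := by
        rw [hSydef, hyfun]
        exact Finset.sum_eq_zero fun k hk => by simp [(Finset.mem_erase.1 hk).1]
      rw [hTx] at hTx1
      refine ⟨?_, ?_, ?_, ?_⟩
      · rw [hy00, hSy0]; ring
      · intro j hj; rw [hy00]; ring
      · rw [hy00, hSy0]; ring_nf; linarith
      · intro l hl; rw [hyfun]; simp [hl]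
end

section
/- In the special evolution algebra ℬ₁, let z = (x,y) ∈ ℝ^{n+ν} with x_1 = 0 and y_1 = 0. Then z is an absolute nilpotent (z² = 0) if and only if (Σ_{i=2}^n x_i)·(Σ_{k=2}^ν y_k) = 0. -/
open Finset

/-- In `ℬ₁`, for `z = (x,y)` with `x₁ = 0` and `y₁ = 0`: `z` is an absolute nilpotent
(`z² = 0`) iff `(Σ_{i≥2} xᵢ)·(Σ_{k≥2} y_k) = 0`. -/
theorem b1_absolute_nilpotent_case {n ν : ℕ} [NeZero n] [NeZero ν]
    (A : Fin n → Fin n → ℝ) (B : Fin ν → Fin ν → ℝ)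
    (hA0 : ∀ i j, 0 ≤ A i j) (hA1 : ∀ i, ∑ j, A i j = 1)
    (hB0 : ∀ k l, 0 ≤ B k l) (hB1 : ∀ k, ∑ l, B k l = 1)
    (z : (Fin n → ℝ) × (Fin ν → ℝ))
    (hx1 : z.1 0 = 0) (hy1 : z.2 0 = 0) :
    V1 A B z = 0 ↔
      (∑ i ∈ Finset.univ.erase 0, z.1 i) * (∑ k ∈ Finset.univ.erase 0, z.2 k) = 0 := by
  have hsumx : ∑ i, z.1 i = ∑ i ∈ Finset.univ.erase 0, z.1 i := by
    rw [← Finset.sum_erase_add Finset.univ z.1 (Finset.mem_univ 0), hx1, add_zero]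
  have hsumy : ∑ k, z.2 k = ∑ k ∈ Finset.univ.erase 0, z.2 k := by
    rw [← Finset.sum_erase_add Finset.univ z.2 (Finset.mem_univ 0), hy1, add_zero]
  have h1 : (V1 A B z).1 0 =
      (∑ k ∈ Finset.univ.erase 0, z.2 k) * ∑ i ∈ Finset.univ.erase 0, z.1 i := by
    simp only [V1, if_pos rfl, hy1, mul_zero, zero_add, ← Finset.mul_sum, hsumx, if_true, eq_self_iff_true]
  have h2 : (V1 A B z).2 0 =
      (∑ i ∈ Finset.univ.erase 0, z.1 i) * ∑ k ∈ Finset.univ.erase 0, z.2 k := by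
    simp only [V1, if_pos rfl, hx1, mul_zero, zero_add, ← Finset.mul_sum, hsumy, if_true, eq_self_iff_true]
  constructor
  · intro h
    have := h2 ▸ congrFun (congrArg Prod.snd h) 0
    simpa using this.symm
  · intro h
    ext j
    · by_cases hj : j = 0
      · subst hj
        rw [h1, mul_comm, h]; rfl
      · simp [V1, hj, hy1]
    · by_cases hl : j = 0
      · subst hl
        rw [h2, h]; rfl
      · simp [V1, hl, hx1]
end
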